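/- Consider the greedy multiscale method: let f* : [ℓ,u] → ℝ be L-Lipschitz, let S ≥ 1, and for each scale s = 1,…,S let x*_s ∈ ℝ^{I_s}, with I_s = 2^{S−s+1} + 1, be the exact samples of f* on the uniform grid with I_s points, with ‖x*_S‖₂ ≤ 1. Suppose the coarsest initialization x_S^0 ∈ ℝ^3 has independent standard normal entries, so E‖x_S^0 − x*_S‖₂ ≤ 2. Suppose iterate convergence holds at each scale, ‖x_s^{K_s} − x*_s‖₂ ≤ q^{K_s}·‖x_s^0 − x*_s‖₂ with rate q ∈ [0,1), and x_s^0 = midpoint linear interpolation of x_{s+1}^{K_{s+1}} for s < S. Then E‖x_1^{K_1} − x*_1‖₂ ≤ q^{K_1}·√(2^{S+1})·(q^{r_S} + (L·(u−ℓ)/2^{S+2})·Σ_{s=1}^{S−1} 2^s·q^{r_s}), where r_s = Σ_{t=2}^{s} K_t with r_1 = 0. -/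

import Mathlib

open Finset MeasureTheory ProbabilityTheory

section AuxGauss

open Real Filter

private lemma aux_int_exp : ∫ x : ℝ, rexp (-2⁻¹ * x ^ 2) = Real.sqrt (2 * π) := by
  rw [integral_gaussian]
  rw [show π / 2⁻¹ = 2 * π by ring]

private lemma aux_integrable_exp : Integrable (fun x : ℝ => rexp (-2⁻¹ * x ^ 2)) :=
  integrable_exp_neg_mul_sq (by norm_num)

private lemma aux_integrable_mul_exp : Integrable (fun x : ℝ => x * rexp (-2⁻¹ * x ^ 2)) :=
  integrable_mul_exp_neg_mul_sq (by norm_num)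

private lemma aux_integrable_sq_exp : Integrable (fun x : ℝ => x ^ 2 * rexp (-2⁻¹ * x ^ 2)) := by
  have := integrable_rpow_mul_exp_neg_mul_sq (b := 2⁻¹) (by norm_num) (s := 2) (by norm_num)
  convert this using 2 with x
  rw [← Real.rpow_natCast x 2]
  norm_num

private lemma aux_int_mul_exp : ∫ x : ℝ, x * rexp (-2⁻¹ * x ^ 2) = 0 := by
  set f : ℝ → ℝ := fun x => x * rexp (-2⁻¹ * x ^ 2) with hf
  have A : MeasurableEmbedding (fun x : ℝ => -x) := (Homeomorph.neg ℝ).measurableEmbedding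
  have h1 : ∫ x : ℝ, f x = ∫ x : ℝ, f (-x) := by
    conv_lhs => rw [← Measure.map_neg_eq_self (volume : Measure ℝ)]
    exact A.integral_map f
  have h2 : ∀ x : ℝ, f (-x) = - f x := by
    intro x; simp only [hf]; ring_nf
  simp_rw [h2, integral_neg] at h1
  linarith

private lemma aux_tendsto_top :
    Tendsto (fun x : ℝ => x * rexp (-2⁻¹ * x ^ 2)) atTop (nhds 0) := by
  have h := (tendsto_rpow_mul_exp_neg_mul_atTop_nhds_zero (1/2) 2⁻¹ (by norm_num)).comp
    (tendsto_pow_atTop (n := 2) two_ne_zero)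
  refine h.congr' ?_
  filter_upwards [eventually_gt_atTop (0:ℝ)] with x hx
  simp only [Function.comp]
  rw [← Real.rpow_natCast x 2, ← Real.rpow_mul hx.le]
  norm_num

private lemma aux_int_sq_exp : ∫ x : ℝ, x ^ 2 * rexp (-2⁻¹ * x ^ 2) = Real.sqrt (2 * π) := by
  have hderiv : ∀ x : ℝ, HasDerivAt (fun x : ℝ => -x * rexp (-2⁻¹ * x ^ 2))
      ((x ^ 2 - 1) * rexp (-2⁻¹ * x ^ 2)) x := by
    intro x
    have h1 : HasDerivAt (fun x : ℝ => -2⁻¹ * x ^ 2) (-x) x := by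
      have := (hasDerivAt_pow 2 x).const_mul (-2⁻¹ : ℝ)
      refine this.congr_deriv ?_; push_cast; ring
    have h2 := h1.exp
    have h3 := (hasDerivAt_id x).neg.mul h2
    refine h3.congr_deriv ?_
    simp only [Pi.neg_apply, id_eq]
    ring
  have hint : Integrable (fun x : ℝ => (x ^ 2 - 1) * rexp (-2⁻¹ * x ^ 2)) := by
    have := aux_integrable_sq_exp.sub aux_integrable_exp
    refine this.congr ?_
    filter_upwards with x
    simp only [Pi.sub_apply]
    ring
  have htop : Tendsto (fun x : ℝ => -x * rexp (-2⁻¹ * x ^ 2)) atTop (nhds 0) := by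
    have := aux_tendsto_top.neg
    simpa using this.congr (fun x => by ring)
  have hbot : Tendsto (fun x : ℝ => -x * rexp (-2⁻¹ * x ^ 2)) atBot (nhds 0) := by
    have := aux_tendsto_top.comp tendsto_neg_atBot_atTop
    refine this.congr (fun x => ?_)
    simp only [Function.comp]
    ring_nf
  have h0 := integral_of_hasDerivAt_of_tendsto hderiv hint hbot htop
  rw [sub_zero] at h0
  have h1 : ∫ x : ℝ, (x ^ 2 - 1) * rexp (-2⁻¹ * x ^ 2)
      = (∫ x : ℝ, x ^ 2 * rexp (-2⁻¹ * x ^ 2)) - ∫ x : ℝ, rexp (-2⁻¹ * x ^ 2) := by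
    rw [← integral_sub aux_integrable_sq_exp aux_integrable_exp]
    congr 1; funext x; ring
  rw [h0] at h1
  rw [aux_int_exp] at h1
  linarith

private lemma aux_pdf_eq (x : ℝ) :
    gaussianPDFReal 0 1 x = (Real.sqrt (2 * π))⁻¹ * rexp (-2⁻¹ * x ^ 2) := by
  simp only [gaussianPDFReal, NNReal.coe_one, mul_one, sub_zero]
  congr 1
  ring_nf

private lemma aux_sq_shift (c x : ℝ) :
    gaussianPDFReal 0 1 x * (x - c) ^ 2
      = (Real.sqrt (2 * π))⁻¹ *
        (x ^ 2 * rexp (-2⁻¹ * x ^ 2) - (2 * c) * (x * rexp (-2⁻¹ * x ^ 2))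
          + c ^ 2 * rexp (-2⁻¹ * x ^ 2)) := by
  rw [aux_pdf_eq]; ring

private lemma aux_integrable_shift (c : ℝ) :
    Integrable (fun x : ℝ => gaussianPDFReal 0 1 x * (x - c) ^ 2) := by
  have h := ((aux_integrable_sq_exp.sub (aux_integrable_mul_exp.const_mul (2 * c))).add
    (aux_integrable_exp.const_mul (c ^ 2))).const_mul (Real.sqrt (2 * π))⁻¹
  refine h.congr ?_
  filter_upwards with x
  simp only [Pi.add_apply, Pi.sub_apply]
  rw [aux_sq_shift]

private lemma aux_int_shift (c : ℝ) :
    ∫ x : ℝ, gaussianPDFReal 0 1 x * (x - c) ^ 2 = 1 + c ^ 2 := by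
  have hsqrt : Real.sqrt (2 * π) ≠ 0 := by positivity
  calc ∫ x : ℝ, gaussianPDFReal 0 1 x * (x - c) ^ 2
      = ∫ x : ℝ, (Real.sqrt (2 * π))⁻¹ *
        (x ^ 2 * rexp (-2⁻¹ * x ^ 2) - (2 * c) * (x * rexp (-2⁻¹ * x ^ 2))
          + c ^ 2 * rexp (-2⁻¹ * x ^ 2)) := by
        congr 1; funext x; rw [aux_sq_shift]
    _ = (Real.sqrt (2 * π))⁻¹ *
        ((∫ x : ℝ, x ^ 2 * rexp (-2⁻¹ * x ^ 2)) - (2 * c) * (∫ x : ℝ, x * rexp (-2⁻¹ * x ^ 2))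
          + c ^ 2 * (∫ x : ℝ, rexp (-2⁻¹ * x ^ 2))) := by
        rw [integral_const_mul]
        congr 1
        have hB : Integrable (fun x : ℝ => (2 * c) * (x * rexp (-2⁻¹ * x ^ 2))) :=
          aux_integrable_mul_exp.const_mul (2 * c)
        have hC : Integrable (fun x : ℝ => c ^ 2 * rexp (-2⁻¹ * x ^ 2)) :=
          aux_integrable_exp.const_mul (c ^ 2)
        have hAB : Integrable (fun x : ℝ =>
            x ^ 2 * rexp (-2⁻¹ * x ^ 2) - (2 * c) * (x * rexp (-2⁻¹ * x ^ 2))) := by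
          refine (aux_integrable_sq_exp.sub hB).congr ?_
          filter_upwards with x
          simp only [Pi.sub_apply]
        rw [integral_add hAB hC, integral_sub aux_integrable_sq_exp hB,
          integral_const_mul, integral_const_mul]
    _ = 1 + c ^ 2 := by
        rw [aux_int_exp, aux_int_mul_exp, aux_int_sq_exp]
        field_simp
        ring

private lemma gaussianReal_integral_sq (c : ℝ) :
    ∫ x, (x - c) ^ 2 ∂(gaussianReal 0 1) = 1 + c ^ 2 := by
  rw [gaussianReal_of_var_ne_zero 0 one_ne_zero]
  have hmeas : Measurable fun x : ℝ => (gaussianPDFReal 0 1 x).toNNReal :=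
    (measurable_gaussianPDFReal 0 1).real_toNNReal
  have hid : gaussianPDF 0 1 = fun x => ((gaussianPDFReal 0 1 x).toNNReal : ENNReal) := rfl
  rw [hid, integral_withDensity_eq_integral_smul hmeas]
  rw [← aux_int_shift c]
  congr 1; funext x
  rw [NNReal.smul_def, Real.coe_toNNReal _ (gaussianPDFReal_nonneg 0 1 x), smul_eq_mul]

private lemma gaussianReal_integrable_sq (c : ℝ) :
    Integrable (fun x => (x - c) ^ 2) (gaussianReal 0 1) := by
  rw [gaussianReal_of_var_ne_zero 0 one_ne_zero]
  have hmeas : Measurable fun x : ℝ => (gaussianPDFReal 0 1 x).toNNReal :=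
    (measurable_gaussianPDFReal 0 1).real_toNNReal
  have hid : gaussianPDF 0 1 = fun x => ((gaussianPDFReal 0 1 x).toNNReal : ENNReal) := rfl
  rw [hid, integrable_withDensity_iff_integrable_smul hmeas]
  refine (aux_integrable_shift c).congr ?_
  filter_upwards with x
  rw [NNReal.smul_def, Real.coe_toNNReal _ (gaussianPDFReal_nonneg 0 1 x), smul_eq_mul]

end AuxGauss

/-- Uniform grid with `I` points on `[l, u]` (0-indexed): `t[i] = l + i·(u−l)/(I−1)`. -/
noncomputable def unifGrid (l u : ℝ) (I : ℕ) (i : ℕ) : ℝ := l + i * (u - l) / ((I : ℝ) - 1)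

/-- Midpoint linear interpolation (0-indexed): even entries copy `x`, odd entries are midpoints. -/
noncomputable def midInterp (x : ℕ → ℝ) (j : ℕ) : ℝ :=
  if j % 2 = 0 then x (j / 2) else (x (j / 2) + x (j / 2 + 1)) / 2

/-- Euclidean norm of the first `n` entries. -/
noncomputable def vnorm (n : ℕ) (x : ℕ → ℝ) : ℝ := Real.sqrt (∑ i ∈ range n, x i ^ 2)

section AuxVnorm

private lemma vnorm_nonneg (n : ℕ) (x : ℕ → ℝ) : 0 ≤ vnorm n x := Real.sqrt_nonneg _

private lemma vnorm_congr {n : ℕ} {x y : ℕ → ℝ} (h : ∀ i < n, x i = y i) :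
    vnorm n x = vnorm n y := by
  unfold vnorm
  congr 1
  exact Finset.sum_congr rfl fun i hi => by rw [h i (mem_range.mp hi)]

private lemma vnorm_add_le (n : ℕ) (x y : ℕ → ℝ) :
    vnorm n (fun i => x i + y i) ≤ vnorm n x + vnorm n y := by
  unfold vnorm
  have hx0 : (0:ℝ) ≤ ∑ i ∈ range n, x i ^ 2 := Finset.sum_nonneg fun i _ => sq_nonneg _
  have hy0 : (0:ℝ) ≤ ∑ i ∈ range n, y i ^ 2 := Finset.sum_nonneg fun i _ => sq_nonneg _
  have hcs := Real.sum_mul_le_sqrt_mul_sqrt (range n) x y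
  have e : ∑ i ∈ range n, (x i + y i) ^ 2
      = (∑ i ∈ range n, x i ^ 2) + 2 * (∑ i ∈ range n, x i * y i)
        + ∑ i ∈ range n, y i ^ 2 := by
    rw [Finset.mul_sum, ← Finset.sum_add_distrib, ← Finset.sum_add_distrib]
    exact Finset.sum_congr rfl fun i _ => by ring
  have h1 : ∑ i ∈ range n, (x i + y i) ^ 2
      ≤ (Real.sqrt (∑ i ∈ range n, x i ^ 2) + Real.sqrt (∑ i ∈ range n, y i ^ 2)) ^ 2 := by
    rw [e]
    nlinarith [Real.sq_sqrt hx0, Real.sq_sqrt hy0, Real.sqrt_nonneg (∑ i ∈ range n, x i ^ 2),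
      Real.sqrt_nonneg (∑ i ∈ range n, y i ^ 2)]
  calc Real.sqrt (∑ i ∈ range n, (x i + y i) ^ 2)
      ≤ Real.sqrt ((Real.sqrt (∑ i ∈ range n, x i ^ 2)
          + Real.sqrt (∑ i ∈ range n, y i ^ 2)) ^ 2) := Real.sqrt_le_sqrt h1
    _ = _ := Real.sqrt_sq (by positivity)

private lemma vnorm_le_sqrt {n : ℕ} {x : ℕ → ℝ} {y : ℕ → ℝ} (h : ∀ i < n, x i ^ 2 ≤ y i) :
    vnorm n x ≤ Real.sqrt (∑ i ∈ range n, y i) :=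
  Real.sqrt_le_sqrt (Finset.sum_le_sum fun i hi => h i (mem_range.mp hi))

private lemma midInterp_sq_sum_le (m : ℕ) (d : ℕ → ℝ) :
    ∑ j ∈ range (2 * m + 1), midInterp d j ^ 2
      ≤ 2 * ∑ i ∈ range (m + 1), d i ^ 2 - (d 0 ^ 2 + d m ^ 2) / 2 := by
  induction m with
  | zero =>
      simp [midInterp]
      nlinarith [sq_nonneg (d 0)]
  | succ m ih =>
      have e1 : 2 * (m + 1) + 1 = (2 * m + 1) + 1 + 1 := by ring
      rw [e1, Finset.sum_range_succ, Finset.sum_range_succ]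
      have h1 : (2 * m + 1) % 2 = 1 := by omega
      have h2 : (2 * m + 1) / 2 = m := by omega
      have h3 : (2 * m + 1 + 1) % 2 = 0 := by omega
      have h4 : (2 * m + 1 + 1) / 2 = m + 1 := by omega
      have e2 : midInterp d (2 * m + 1) = (d m + d (m + 1)) / 2 := by
        unfold midInterp; rw [h1, h2]; norm_num
      have e3 : midInterp d (2 * m + 1 + 1) = d (m + 1) := by
        unfold midInterp; rw [h3, h4]; norm_num
      rw [e2, e3, Finset.sum_range_succ (fun i => d i ^ 2) (m + 1)]
      nlinarith [sq_nonneg (d m - d (m + 1)), sq_nonneg (d 0)]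

private lemma vnorm_midInterp_le (m : ℕ) (d : ℕ → ℝ) :
    vnorm (2 * m + 1) (midInterp d) ≤ Real.sqrt 2 * vnorm (m + 1) d := by
  unfold vnorm
  rw [← Real.sqrt_mul (by norm_num : (0:ℝ) ≤ 2)]
  apply Real.sqrt_le_sqrt
  have := midInterp_sq_sum_le m d
  nlinarith [sq_nonneg (d 0), sq_nonneg (d m)]

private lemma sum_if_even (m : ℕ) (c : ℝ) :
    ∑ j ∈ range (2 * m + 1), (if j % 2 = 0 then (0:ℝ) else c) = m * c := by
  induction m with
  | zero => simp
  | succ m ih =>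
      have e1 : 2 * (m + 1) + 1 = (2 * m + 1) + 1 + 1 := by ring
      rw [e1, Finset.sum_range_succ, Finset.sum_range_succ, ih]
      have h1 : (2 * m + 1) % 2 = 1 := by omega
      have h3 : (2 * m + 1 + 1) % 2 = 0 := by omega
      rw [h1, h3]
      push_cast
      norm_num
      ring

private lemma sqrt_two_pow (n : ℕ) : Real.sqrt ((2:ℝ) ^ n) = Real.sqrt 2 ^ n := by
  induction n with
  | zero => simp
  | succ n ih => rw [pow_succ, pow_succ, Real.sqrt_mul (by positivity), ih]

private lemma sqrt_le_quarter {x : ℝ} (hx : 0 ≤ x) : Real.sqrt x ≤ (x + 4) / 4 := by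
  nlinarith [sq_nonneg (Real.sqrt x - 2), Real.sq_sqrt hx, Real.sqrt_nonneg x]

private lemma midInterp_sub (a b : ℕ → ℝ) (j : ℕ) :
    midInterp (fun i => a i - b i) j = midInterp a j - midInterp b j := by
  unfold midInterp
  split <;> ring

private lemma unifGrid_mem {l u : ℝ} (hlu : l < u) {m k : ℕ} (hm : 0 < m) (hk : k ≤ m) :
    unifGrid l u (m + 1) k ∈ Set.Icc l u := by
  unfold unifGrid
  have hm' : (0:ℝ) < m := by exact_mod_cast hm
  have hk' : (k:ℝ) ≤ m := by exact_mod_cast hk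
  have hk0 : (0:ℝ) ≤ (k:ℝ) := Nat.cast_nonneg k
  have hden : ((m + 1 : ℕ) : ℝ) - 1 = (m : ℝ) := by push_cast; ring
  rw [hden]
  have hul : (0:ℝ) ≤ u - l := by linarith
  constructor
  · have : 0 ≤ (k:ℝ) * (u - l) / m := div_nonneg (mul_nonneg hk0 hul) hm'.le
    linarith
  · have h1 : (k:ℝ) * (u - l) / m ≤ (m:ℝ) * (u - l) / m := by
      gcongr
    have h2 : (m:ℝ) * (u - l) / m = u - l := by field_simp
    linarith [h1.trans_eq h2]

private lemma unifGrid_even {l u : ℝ} {m k : ℕ} (hm : 0 < m) :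
    unifGrid l u (2 * m + 1) (2 * k) = unifGrid l u (m + 1) k := by
  unfold unifGrid
  have hm' : (0:ℝ) < m := by exact_mod_cast hm
  have e1 : ((2 * m + 1 : ℕ) : ℝ) - 1 = 2 * (m : ℝ) := by push_cast; ring
  have e2 : ((m + 1 : ℕ) : ℝ) - 1 = (m : ℝ) := by push_cast; ring
  rw [e1, e2]
  push_cast
  field_simp

private lemma midpoint_err {l u L : ℝ} (hlu : l < u) (f : ℝ → ℝ)
    (hf : ∀ a ∈ Set.Icc l u, ∀ b ∈ Set.Icc l u, |f a - f b| ≤ L * |a - b|)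
    {m k : ℕ} (hm : 0 < m) (hk : k < m) :
    |(f (unifGrid l u (m + 1) k) + f (unifGrid l u (m + 1) (k + 1))) / 2
      - f (unifGrid l u (2 * m + 1) (2 * k + 1))| ≤ L * (u - l) / (2 * m) := by
  have hm' : (0:ℝ) < m := by exact_mod_cast hm
  set a := unifGrid l u (m + 1) k with ha
  set b := unifGrid l u (m + 1) (k + 1) with hb
  have ht' : unifGrid l u (2 * m + 1) (2 * k + 1) = unifGrid l u (2 * m + 1) (2 * k + 1) := rfl
  set t := unifGrid l u (2 * m + 1) (2 * k + 1) with htdef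
  have hamem : a ∈ Set.Icc l u := unifGrid_mem hlu hm hk.le
  have hbmem : b ∈ Set.Icc l u := unifGrid_mem hlu hm hk
  have htmem : t ∈ Set.Icc l u := by
    have : (2 * m + 1) = (2 * m) + 1 := by ring
    rw [htdef, this]
    exact unifGrid_mem hlu (by omega) (by omega)
  have e1 : a - t = -((u - l) / (2 * m)) := by
    rw [ha, htdef]
    unfold unifGrid
    have d1 : ((m + 1 : ℕ) : ℝ) - 1 = (m : ℝ) := by push_cast; ring
    have d2 : ((2 * m + 1 : ℕ) : ℝ) - 1 = 2 * (m : ℝ) := by push_cast; ring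
    rw [d1, d2]
    push_cast
    field_simp
    ring
  have e2 : b - t = (u - l) / (2 * m) := by
    rw [hb, htdef]
    unfold unifGrid
    have d1 : ((m + 1 : ℕ) : ℝ) - 1 = (m : ℝ) := by push_cast; ring
    have d2 : ((2 * m + 1 : ℕ) : ℝ) - 1 = 2 * (m : ℝ) := by push_cast; ring
    rw [d1, d2]
    push_cast
    field_simp
    ring
  have hfa := hf a hamem t htmem
  have hfb := hf b hbmem t htmem
  have hnn : (0:ℝ) ≤ (u - l) / (2 * m) := div_nonneg (by linarith) (by positivity)
  have habs : |a - t| = (u - l) / (2 * m) := by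
    rw [e1, abs_neg, abs_of_nonneg hnn]
  have hbabs : |b - t| = (u - l) / (2 * m) := by
    rw [e2, abs_of_nonneg hnn]
  rw [habs] at hfa
  rw [hbabs] at hfb
  have key : (f a + f b) / 2 - f t = ((f a - f t) + (f b - f t)) / 2 := by ring
  rw [key]
  calc |((f a - f t) + (f b - f t)) / 2| = |(f a - f t) + (f b - f t)| / 2 := by
        rw [abs_div]; norm_num
    _ ≤ (|f a - f t| + |f b - f t|) / 2 := by
        have := abs_add_le (f a - f t) (f b - f t)
        linarith
    _ ≤ (L * ((u - l) / (2 * m)) + L * ((u - l) / (2 * m))) / 2 := by linarith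
    _ = L * (u - l) / (2 * m) := by field_simp; ring

end AuxVnorm

/-- Expected greedy multiscale convergence from a standard Gaussian initialization at the
coarsest scale `S` (which has `I_S = 3` points); scale `s` has `I_s = 2^(S−s+1) + 1` points. -/
theorem expected_greedy_multiscale_convergence
    (l u : ℝ) (hlu : l < u) (S : ℕ) (hS : 1 ≤ S)
    {Ω : Type*} [MeasurableSpace Ω] (μ : Measure Ω) [IsProbabilityMeasure μ]
    (fstar : ℝ → ℝ) (L q : ℝ) (hq0 : 0 ≤ q) (hq1 : q < 1)
    (hfLip : ∀ a ∈ Set.Icc l u, ∀ b ∈ Set.Icc l u, |fstar a - fstar b| ≤ L * |a - b|)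
    (K : ℕ → ℕ)
    (xstar : ℕ → ℕ → ℝ) (x0 xK : Ω → ℕ → ℕ → ℝ)
    (hxstar : ∀ s, 1 ≤ s → s ≤ S → ∀ i < 2 ^ (S - s + 1) + 1,
      xstar s i = fstar (unifGrid l u (2 ^ (S - s + 1) + 1) i))
    (hxstarS : vnorm 3 (xstar S) ≤ 1)
    (hmeas : ∀ i, Measurable fun ω => x0 ω S i)
    (hlaw : ∀ i < 3, Measure.map (fun ω => x0 ω S i) μ = gaussianReal 0 1)
    (hindep : iIndepFun
      (fun i : Fin 3 => fun ω => x0 ω S i.val) μ)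
    (hconv : ∀ ω, ∀ s, 1 ≤ s → s ≤ S →
      vnorm (2 ^ (S - s + 1) + 1) (fun i => xK ω s i - xstar s i) ≤
        q ^ K s * vnorm (2 ^ (S - s + 1) + 1) (fun i => x0 ω s i - xstar s i))
    (hwarm : ∀ ω, ∀ s, 1 ≤ s → s < S → ∀ j < 2 ^ (S - s + 1) + 1,
      x0 ω s j = midInterp (xK ω (s + 1)) j) :
    (∫ ω, vnorm 3 (fun i => x0 ω S i - xstar S i) ∂μ ≤ 2) ∧
    (∫ ω, vnorm (2 ^ S + 1) (fun i => xK ω 1 i - xstar 1 i) ∂μ ≤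
      q ^ K 1 * Real.sqrt ((2 : ℝ) ^ (S + 1)) *
        (q ^ (∑ t ∈ Finset.Icc 2 S, K t) +
          L * (u - l) / 2 ^ (S + 2) *
            ∑ s ∈ Finset.Icc 1 (S - 1), (2 : ℝ) ^ s * q ^ (∑ t ∈ Finset.Icc 2 s, K t))) := by
  -- Lipschitz constant is nonnegative
  have hul : (0:ℝ) < u - l := sub_pos.mpr hlu
  have hL : 0 ≤ L := by
    have h := hfLip u ⟨hlu.le, le_refl u⟩ l ⟨le_refl l, hlu.le⟩
    have h2 : |u - l| = u - l := abs_of_pos hul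
    rw [h2] at h
    nlinarith [abs_nonneg (fstar u - fstar l)]
  -- the squared error at the coarsest scale
  set Q : Ω → ℝ := fun ω => ∑ i ∈ range 3, (x0 ω S i - xstar S i) ^ 2 with hQ
  have hQnn : ∀ ω, 0 ≤ Q ω := fun ω => Finset.sum_nonneg fun i _ => sq_nonneg _
  have hQi : ∀ i < 3, Integrable (fun ω => (x0 ω S i - xstar S i) ^ 2) μ ∧
      ∫ ω, (x0 ω S i - xstar S i) ^ 2 ∂μ = 1 + xstar S i ^ 2 := by
    intro i hi
    have hg : Continuous fun x : ℝ => (x - xstar S i) ^ 2 := by continuity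
    have hgm : AEStronglyMeasurable (fun x : ℝ => (x - xstar S i) ^ 2)
        (Measure.map (fun ω => x0 ω S i) μ) := hg.aestronglyMeasurable
    constructor
    · have hInt := gaussianReal_integrable_sq (xstar S i)
      rw [← hlaw i hi] at hInt
      exact (integrable_map_measure hgm (hmeas i).aemeasurable).mp hInt
    · have hVal := gaussianReal_integral_sq (xstar S i)
      rw [← hlaw i hi, integral_map (hmeas i).aemeasurable hgm] at hVal
      exact hVal
  have hQint : Integrable Q μ := by
    rw [hQ]
    exact integrable_finset_sum (range 3) fun i hi => (hQi i (mem_range.mp hi)).1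
  have hQval : ∫ ω, Q ω ∂μ = 3 + ∑ i ∈ range 3, xstar S i ^ 2 := by
    rw [hQ]
    rw [integral_finset_sum (range 3) fun i hi => (hQi i (mem_range.mp hi)).1]
    rw [Finset.sum_congr rfl fun i hi => (hQi i (mem_range.mp hi)).2]
    rw [Finset.sum_add_distrib]
    norm_num
  have hc2 : ∑ i ∈ range 3, xstar S i ^ 2 ≤ 1 := by
    have h0 : (0:ℝ) ≤ ∑ i ∈ range 3, xstar S i ^ 2 :=
      Finset.sum_nonneg fun i _ => sq_nonneg _
    have := hxstarS
    unfold vnorm at this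
    nlinarith [Real.sq_sqrt h0, Real.sqrt_nonneg (∑ i ∈ range 3, xstar S i ^ 2)]
  have hQle : ∫ ω, Q ω ∂μ ≤ 4 := by rw [hQval]; linarith
  have hQmeas : Measurable Q := by
    rw [hQ]
    exact Finset.measurable_sum (range 3) fun i _ =>
      ((hmeas i).sub measurable_const).pow_const 2
  have hεeq : ∀ ω, vnorm 3 (fun i => x0 ω S i - xstar S i) = Real.sqrt (Q ω) := fun ω => rfl
  have hQ4int : Integrable (fun ω => (Q ω + 4) / 4) μ :=
    (hQint.add (integrable_const 4)).div_const 4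
  have part1 : ∫ ω, vnorm 3 (fun i => x0 ω S i - xstar S i) ∂μ ≤ 2 := by
    have hle : ∀ ω, vnorm 3 (fun i => x0 ω S i - xstar S i) ≤ (Q ω + 4) / 4 := by
      intro ω
      rw [hεeq ω]
      exact sqrt_le_quarter (hQnn ω)
    calc ∫ ω, vnorm 3 (fun i => x0 ω S i - xstar S i) ∂μ
        ≤ ∫ ω, (Q ω + 4) / 4 ∂μ := by
          refine integral_mono_of_nonneg (Filter.Eventually.of_forall fun ω => vnorm_nonneg _ _)
            hQ4int (Filter.Eventually.of_forall hle)
      _ = ((∫ ω, Q ω ∂μ) + 4) / 4 := by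
          rw [integral_div, integral_add hQint (integrable_const 4), integral_const]
          simp [measure_univ]
      _ ≤ 2 := by linarith
  refine ⟨part1, ?_⟩
  -- integrability of the coarsest error norm
  have hεint : Integrable (fun ω => vnorm 3 (fun i => x0 ω S i - xstar S i)) μ := by
    refine Integrable.mono' hQ4int ?_ ?_
    · exact (Real.continuous_sqrt.measurable.comp hQmeas).aestronglyMeasurable
    · refine Filter.Eventually.of_forall fun ω => ?_
      rw [Real.norm_eq_abs, abs_of_nonneg (vnorm_nonneg _ _), hεeq ω]
      exact sqrt_le_quarter (hQnn ω)
  have hε2 : ∫ ω, vnorm 3 (fun i => x0 ω S i - xstar S i) ∂μ ≤ 2 := part1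
  -- the interpolation error constant at each scale
  set δ : ℕ → ℝ := fun s => Real.sqrt 2 ^ (S - s) * (L * (u - l) / 2 ^ (S - s + 1)) with hδ
  have hδ0 : ∀ s, 0 ≤ δ s := by
    intro s
    rw [hδ]
    have h1 : (0:ℝ) ≤ L * (u - l) := mul_nonneg hL hul.le
    positivity
  -- warm-start error bound: one scale step
  have hB : ∀ ω, ∀ s, 1 ≤ s → s < S →
      vnorm (2 ^ (S - s + 1) + 1) (fun i => x0 ω s i - xstar s i) ≤
        Real.sqrt 2 * vnorm (2 ^ (S - s) + 1) (fun i => xK ω (s + 1) i - xstar (s + 1) i)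
          + δ s := by
    intro ω s hs1 hsS
    set m : ℕ := 2 ^ (S - s) with hm
    have hm0 : 0 < m := Nat.pow_pos (by norm_num)
    have hm1 : 2 ^ (S - s + 1) + 1 = 2 * m + 1 := by
      rw [hm, pow_succ]; ring
    have hmR : ((m : ℝ)) = (2:ℝ) ^ (S - s) := by rw [hm]; push_cast; ring
    have hsub : S - (s + 1) + 1 = S - s := by omega
    have hstar' : ∀ i < m + 1, xstar (s + 1) i = fstar (unifGrid l u (m + 1) i) := by
      intro i hi
      have h := hxstar (s + 1) (by omega) (by omega) i
      rw [hsub, ← hm] at h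
      exact h hi
    have hwarm' : ∀ i < 2 * m + 1, x0 ω s i = midInterp (xK ω (s + 1)) i := by
      intro i hi
      refine hwarm ω s hs1 hsS i ?_
      rw [hm1]
      exact hi
    rw [hm1]
    have e0 : vnorm (2 * m + 1) (fun i => x0 ω s i - xstar s i)
        = vnorm (2 * m + 1) (fun i => midInterp (xK ω (s + 1)) i - xstar s i) :=
      vnorm_congr fun i hi => by rw [hwarm' i hi]
    rw [e0]
    have e1 : vnorm (2 * m + 1) (fun i => midInterp (xK ω (s + 1)) i - xstar s i)
        = vnorm (2 * m + 1) (fun i =>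
            (midInterp (xK ω (s + 1)) i - midInterp (xstar (s + 1)) i)
            + (midInterp (xstar (s + 1)) i - xstar s i)) :=
      vnorm_congr fun i hi => by ring
    rw [e1]
    refine (vnorm_add_le _ _ _).trans (add_le_add ?_ ?_)
    · -- contraction of midpoint interpolation
      have e2 : vnorm (2 * m + 1)
            (fun i => midInterp (xK ω (s + 1)) i - midInterp (xstar (s + 1)) i)
          = vnorm (2 * m + 1) (midInterp (fun i => xK ω (s + 1) i - xstar (s + 1) i)) :=
        (vnorm_congr fun i hi => by rw [midInterp_sub]).symm
      rw [e2]
      exact vnorm_midInterp_le m _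
    · -- interpolation error bound
      set c : ℝ := L * (u - l) / 2 ^ (S - s + 1) with hc
      have hc0 : 0 ≤ c := by
        rw [hc]
        exact div_nonneg (mul_nonneg hL hul.le) (by positivity)
      have hptw : ∀ j < 2 * m + 1, (midInterp (xstar (s + 1)) j - xstar s j) ^ 2
          ≤ (if j % 2 = 0 then (0:ℝ) else c ^ 2) := by
        intro j hj
        have eb : xstar s j = fstar (unifGrid l u (2 * m + 1) j) := by
          have h := hxstar s hs1 (by omega) j
          rw [hm1] at h
          exact h hj
        by_cases hpar : j % 2 = 0
        · rw [if_pos hpar]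
          have hk : j = 2 * (j / 2) := by omega
          have hj2 : j / 2 < m + 1 := by omega
          have emid : midInterp (xstar (s + 1)) j = xstar (s + 1) (j / 2) := by
            unfold midInterp; rw [if_pos hpar]
          have egrid : unifGrid l u (2 * m + 1) j = unifGrid l u (m + 1) (j / 2) := by
            conv_lhs => rw [hk]
            exact unifGrid_even hm0
          rw [emid, eb, hstar' _ hj2, egrid, sub_self]
          norm_num
        · rw [if_neg hpar]
          set k := j / 2 with hkdef
          have hk : j = 2 * k + 1 := by omega
          have hkm : k < m := by omega
          have emid : midInterp (xstar (s + 1)) j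
              = (xstar (s + 1) k + xstar (s + 1) (k + 1)) / 2 := by
            unfold midInterp; rw [if_neg hpar]
          rw [emid, eb, hstar' k (by omega), hstar' (k + 1) (by omega), hk]
          have herr := midpoint_err hlu fstar hfLip hm0 hkm
          have hceq : L * (u - l) / (2 * (m:ℝ)) = c := by
            rw [hc, hmR, pow_succ]
            ring
          rw [hceq] at herr
          have habs := abs_le.mp herr
          nlinarith [habs.1, habs.2]
      have hv := vnorm_le_sqrt hptw
      rw [sum_if_even m (c ^ 2)] at hv
      refine hv.trans (le_of_eq ?_)
      rw [Real.sqrt_mul (by positivity) (c ^ 2), Real.sqrt_sq hc0, hmR, sqrt_two_pow]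
  -- main downward induction over scales
  have key : ∀ n, ∀ s, 1 ≤ s → s + n = S → ∀ ω,
      vnorm (2 ^ (S - s + 1) + 1) (fun i => xK ω s i - xstar s i) ≤
        q ^ K s * (Real.sqrt 2 ^ (S - s) * q ^ (∑ t ∈ Finset.Icc (s + 1) S, K t)
            * vnorm 3 (fun i => x0 ω S i - xstar S i)
          + ∑ t ∈ Finset.Icc s (S - 1),
              Real.sqrt 2 ^ (t - s) * q ^ (∑ r ∈ Finset.Icc (s + 1) t, K r) * δ t) := by
    intro n
    induction n with
    | zero =>
        intro s hs1 hsum ω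
        have hsS : s = S := by omega
        subst hsS
        have h := hconv ω s hs1 le_rfl
        have e1 : s - s + 1 = 1 := by omega
        rw [e1] at h ⊢
        have e2 : (2:ℕ) ^ 1 + 1 = 3 := by norm_num
        rw [e2] at h ⊢
        rw [Finset.Icc_eq_empty (by omega : ¬ s + 1 ≤ s),
          Finset.Icc_eq_empty (by omega : ¬ s ≤ s - 1)]
        simp only [Finset.sum_empty, pow_zero, Nat.sub_self, one_mul, mul_one, add_zero]
        exact h
    | succ n ih =>
        intro s hs1 hsum ω
        have hsS : s < S := by omega
        have h1 := hconv ω s hs1 (by omega)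
        have h2 := hB ω s hs1 hsS
        have h3 := ih (s + 1) (by omega) (by omega) ω
        have hsub : S - (s + 1) + 1 = S - s := by omega
        rw [hsub] at h3
        have hq' : (0:ℝ) ≤ q ^ K s := pow_nonneg hq0 _
        have step : vnorm (2 ^ (S - s + 1) + 1) (fun i => xK ω s i - xstar s i)
            ≤ q ^ K s * (Real.sqrt 2 *
              (q ^ K (s + 1) * (Real.sqrt 2 ^ (S - (s + 1))
                  * q ^ (∑ t ∈ Finset.Icc (s + 1 + 1) S, K t)
                  * vnorm 3 (fun i => x0 ω S i - xstar S i)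
                + ∑ t ∈ Finset.Icc (s + 1) (S - 1),
                    Real.sqrt 2 ^ (t - (s + 1))
                      * q ^ (∑ r ∈ Finset.Icc (s + 1 + 1) t, K r) * δ t))
              + δ s) := by
          refine h1.trans (mul_le_mul_of_nonneg_left (h2.trans ?_) hq')
          have := mul_le_mul_of_nonneg_left h3 (Real.sqrt_nonneg 2)
          linarith
        refine step.trans (le_of_eq ?_)
        congr 1
        have hAA : Real.sqrt 2 ^ (S - s) * q ^ (∑ t ∈ Finset.Icc (s + 1) S, K t)
            = Real.sqrt 2 * (q ^ K (s + 1) * (Real.sqrt 2 ^ (S - (s + 1))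
                * q ^ (∑ t ∈ Finset.Icc (s + 1 + 1) S, K t))) := by
          have hins : Finset.Icc (s + 1) S = insert (s + 1) (Finset.Icc (s + 1 + 1) S) := by
            ext a
            simp only [Finset.mem_Icc, Finset.mem_insert]
            omega
          have hnot : (s + 1) ∉ Finset.Icc (s + 1 + 1) S := by
            simp only [Finset.mem_Icc]
            omega
          rw [hins, Finset.sum_insert hnot, pow_add]
          have hse : S - s = (S - (s + 1)) + 1 := by omega
          rw [hse, pow_succ]
          ring
        have hsplit : Finset.Icc s (S - 1) = insert s (Finset.Icc (s + 1) (S - 1)) := by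
          ext a
          simp only [Finset.mem_Icc, Finset.mem_insert]
          omega
        have hnot2 : s ∉ Finset.Icc (s + 1) (S - 1) := by
          simp only [Finset.mem_Icc]
          omega
        rw [hsplit, Finset.sum_insert hnot2]
        have hterm : Real.sqrt 2 ^ (s - s) * q ^ (∑ r ∈ Finset.Icc (s + 1) s, K r) * δ s
            = δ s := by
          rw [Nat.sub_self, Finset.Icc_eq_empty (by omega : ¬ s + 1 ≤ s)]
          simp
        have hsum2 : ∑ t ∈ Finset.Icc (s + 1) (S - 1),
              Real.sqrt 2 ^ (t - s) * q ^ (∑ r ∈ Finset.Icc (s + 1) t, K r) * δ t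
            = ∑ t ∈ Finset.Icc (s + 1) (S - 1),
              Real.sqrt 2 * (q ^ K (s + 1) * (Real.sqrt 2 ^ (t - (s + 1))
                * q ^ (∑ r ∈ Finset.Icc (s + 1 + 1) t, K r) * δ t)) := by
          refine Finset.sum_congr rfl fun t ht => ?_
          simp only [Finset.mem_Icc] at ht
          have hins : Finset.Icc (s + 1) t = insert (s + 1) (Finset.Icc (s + 1 + 1) t) := by
            ext a
            simp only [Finset.mem_Icc, Finset.mem_insert]
            omega
          have hnot : (s + 1) ∉ Finset.Icc (s + 1 + 1) t := by
            simp only [Finset.mem_Icc]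
            omega
          rw [hins, Finset.sum_insert hnot, pow_add]
          have hte : t - s = (t - (s + 1)) + 1 := by omega
          rw [hte, pow_succ]
          ring
        rw [hterm, hsum2, hAA, ← Finset.mul_sum, ← Finset.mul_sum]
        ring
  -- specialize to the finest scale
  have hkey := key (S - 1) 1 le_rfl (by omega)
  have hS1 : S - 1 + 1 = S := by omega
  rw [hS1] at hkey
  simp only [show (1:ℕ) + 1 = 2 by norm_num] at hkey
  set C1 : ℝ := q ^ K 1 * (Real.sqrt 2 ^ (S - 1) * q ^ (∑ t ∈ Finset.Icc 2 S, K t)) with hC1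
  set C2 : ℝ := q ^ K 1 * (∑ t ∈ Finset.Icc 1 (S - 1),
    Real.sqrt 2 ^ (t - 1) * q ^ (∑ r ∈ Finset.Icc 2 t, K r) * δ t) with hC2
  have hpt : ∀ ω, vnorm (2 ^ S + 1) (fun i => xK ω 1 i - xstar 1 i)
      ≤ C1 * vnorm 3 (fun i => x0 ω S i - xstar S i) + C2 := by
    intro ω
    refine (hkey ω).trans (le_of_eq ?_)
    rw [hC1, hC2]
    ring
  have hC10 : 0 ≤ C1 := by
    rw [hC1]
    exact mul_nonneg (pow_nonneg hq0 _)
      (mul_nonneg (pow_nonneg (Real.sqrt_nonneg 2) _) (pow_nonneg hq0 _))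
  have hint2 : Integrable
      (fun ω => C1 * vnorm 3 (fun i => x0 ω S i - xstar S i) + C2) μ :=
    (hεint.const_mul C1).add (integrable_const C2)
  have hfin : ∫ ω, vnorm (2 ^ S + 1) (fun i => xK ω 1 i - xstar 1 i) ∂μ
      ≤ C1 * 2 + C2 := by
    calc ∫ ω, vnorm (2 ^ S + 1) (fun i => xK ω 1 i - xstar 1 i) ∂μ
        ≤ ∫ ω, (C1 * vnorm 3 (fun i => x0 ω S i - xstar S i) + C2) ∂μ :=
          integral_mono_of_nonneg (Filter.Eventually.of_forall fun ω => vnorm_nonneg _ _)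
            hint2 (Filter.Eventually.of_forall hpt)
      _ = C1 * (∫ ω, vnorm 3 (fun i => x0 ω S i - xstar S i) ∂μ) + C2 := by
          rw [integral_add (hεint.const_mul C1) (integrable_const C2),
            integral_const_mul, integral_const]
          simp [measure_univ]
      _ ≤ C1 * 2 + C2 := add_le_add_left (mul_le_mul_of_nonneg_left part1 hC10) C2
  refine hfin.trans (le_of_eq ?_)
  have hsq : Real.sqrt ((2:ℝ) ^ (S + 1)) = Real.sqrt 2 ^ (S + 1) := sqrt_two_pow _
  have hSe : S + 1 = (S - 1) + 2 := by omega
  have h2' : Real.sqrt 2 ^ (S + 1) = Real.sqrt 2 ^ (S - 1) * 2 := by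
    rw [hSe, pow_add, Real.sq_sqrt (by norm_num : (0:ℝ) ≤ 2)]
  have hsum : ∑ t ∈ Finset.Icc 1 (S - 1),
        Real.sqrt 2 ^ (t - 1) * q ^ (∑ r ∈ Finset.Icc 2 t, K r) * δ t
      = (Real.sqrt 2 ^ (S - 1) * 2) * (L * (u - l) / 2 ^ (S + 2) *
          ∑ t ∈ Finset.Icc 1 (S - 1), (2:ℝ) ^ t * q ^ (∑ r ∈ Finset.Icc 2 t, K r)) := by
    rw [Finset.mul_sum, Finset.mul_sum]
    refine Finset.sum_congr rfl fun t ht => ?_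
    simp only [Finset.mem_Icc] at ht
    simp only [hδ]
    have e1 : (t - 1) + (S - t) = S - 1 := by omega
    have e2 : (S - t + 1) + (t + 1) = S + 2 := by omega
    rw [show Real.sqrt 2 ^ (S - 1) = Real.sqrt 2 ^ (t - 1) * Real.sqrt 2 ^ (S - t) by
      rw [← pow_add, e1]]
    rw [show (2:ℝ) ^ (S + 2) = 2 ^ (S - t + 1) * 2 ^ (t + 1) by rw [← pow_add, e2]]
    have hpow1 : ((2:ℝ) ^ (S - t + 1)) ≠ 0 := by positivity
    have hpow2 : ((2:ℝ) ^ (t + 1)) ≠ 0 := by positivity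
    field_simp
    ring
  rw [hC1, hC2, hsq, h2', hsum]
  ring
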